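/- Let ξ₊, ξ₋ be the eigenvalues of a matrix W ∈ SL_2(C) with ξ₊ ≠ ξ₋, and suppose the 3×3 matrix S_m = I + W' + ⋯ + (W')^{m-1} where W' has eigenvalues ξ₊², 1, ξ₋² (the adjoint/symmetric-square eigenvalues). Then det(S_m) = m·t_m², where t_m = (ξ₊^m − ξ₋^m)/(ξ₊ − ξ₋) and ξ₊·ξ₋ = 1. -/

import Mathlib

theorem det_geometric_sum_adjoint (ξp ξm : ℂ) (hprod : ξp * ξm = 1)
    (hne : ξp ≠ ξm) (m : ℕ) :
    let D : Matrix (Fin 3) (Fin 3) ℂ := Matrix.diagonal ![ξp ^ 2, 1, ξm ^ 2]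
    let S := ∑ i ∈ Finset.range m, (D⁻¹) ^ i
    S.det = (m : ℂ) * ((ξp ^ m - ξm ^ m) / (ξp - ξm)) ^ 2 := by
  intro D S
  have hp0 : ξp ≠ 0 := by rintro rfl; simp at hprod
  have hminv : ξm = ξp⁻¹ := by
    field_simp
    linear_combination hprod
  subst hminv
  have hsq : ξp ^ 2 ≠ 1 := by
    intro h
    apply hne
    have h2 : ξp * ξp = 1 := by linear_combination h
    exact eq_inv_of_mul_eq_one_left h2
  have hsub : ξp - ξp⁻¹ ≠ 0 := sub_ne_zero.mpr hne
  have h1 : ((ξp⁻¹) ^ 2 : ℂ) ≠ 1 := by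
    intro h
    apply hsq
    field_simp at h
    linear_combination -h
  have hsub1 : (ξp⁻¹) ^ 2 - 1 ≠ 0 := sub_ne_zero.mpr h1
  have hsub2 : ξp ^ 2 - 1 ≠ 0 := sub_ne_zero.mpr hsq
  have hDinv : D⁻¹ = Matrix.diagonal ![(ξp⁻¹) ^ 2, 1, ξp ^ 2] := by
    apply Matrix.inv_eq_right_inv
    rw [show D = Matrix.diagonal ![ξp ^ 2, 1, (ξp⁻¹) ^ 2] from rfl,
      Matrix.diagonal_mul_diagonal]
    have : (fun i => ![ξp ^ 2, 1, (ξp⁻¹) ^ 2] i * ![(ξp⁻¹) ^ 2, 1, ξp ^ 2] i)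
        = (1 : Fin 3 → ℂ) := by
      funext j
      fin_cases j <;> simp <;> field_simp
    rw [this]; exact Matrix.diagonal_one
  have hS : S = Matrix.diagonal
      (fun j => ∑ i ∈ Finset.range m, (![(ξp⁻¹) ^ 2, 1, ξp ^ 2] j) ^ i) := by
    show ∑ i ∈ Finset.range m, (D⁻¹) ^ i = _
    rw [hDinv]
    ext i j
    simp only [Matrix.sum_apply, Matrix.diagonal_pow, Matrix.diagonal_apply]
    by_cases h : i = j <;> simp [h, Pi.pow_apply]
  rw [hS, Matrix.det_diagonal, Fin.prod_univ_three]
  simp only [Matrix.cons_val_zero, Matrix.cons_val_one, Matrix.head_cons,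
    Matrix.cons_val_two, Matrix.tail_cons, one_pow, Finset.sum_const,
    Finset.card_range, nsmul_eq_mul, mul_one]
  rw [geom_sum_eq h1, geom_sum_eq hsq]
  have key : (((ξp⁻¹) ^ 2) ^ m - 1) / ((ξp⁻¹) ^ 2 - 1) *
      (((ξp ^ 2) ^ m - 1) / (ξp ^ 2 - 1))
      = ((ξp ^ m - (ξp⁻¹) ^ m) / (ξp - ξp⁻¹)) ^ 2 := by
    rw [div_mul_div_comm, div_pow,
      div_eq_div_iff (mul_ne_zero hsub1 hsub2) (pow_ne_zero 2 hsub)]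
    field_simp
    have hP : ξp ^ m * ξp⁻¹ ^ m = 1 := by rw [← mul_pow, mul_inv_cancel₀ hp0, one_pow]
    linear_combination (ξp ^ 2 - 1) * (ξp ^ m * ξp⁻¹ ^ m - 1) * hP
  calc (((ξp⁻¹) ^ 2) ^ m - 1) / ((ξp⁻¹) ^ 2 - 1) * (m : ℂ) *
        (((ξp ^ 2) ^ m - 1) / (ξp ^ 2 - 1))
      = (m : ℂ) * ((((ξp⁻¹) ^ 2) ^ m - 1) / ((ξp⁻¹) ^ 2 - 1) *
        (((ξp ^ 2) ^ m - 1) / (ξp ^ 2 - 1))) := by ring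
    _ = _ := by rw [key]
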